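/- Let n ≥ 2, let f be an affine permutation of quasi-period n, let i ∈ ℤ, and let s_i be the affine permutation that interchanges i + pn and i + 1 + pn for all p ∈ ℤ and fixes all other integers. Then ℓ(f ∘ s_i) < ℓ(f) if and only if c_i(f) > c_{i+1}(f); and in that case, for every j ∈ ℤ, c_j(f ∘ s_i) = c_{s_i(j)}(f) − 1 if j ≡ i + 1 (mod n), and c_j(f ∘ s_i) = c_{s_i(j)}(f) otherwise. -/

import Mathlib

/-- The code of an affine permutation: `cᵢ(f) = #{j > i : f j < f i}`. -/
noncomputable def affineCode (g : ℤ → ℤ) (i : ℤ) : ℕ := {j : ℤ | i < j ∧ g j < g i}.ncard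

/-- The length of an affine permutation of quasi-period `n`: the number of
inversions `(i,j)` with `1 ≤ i ≤ n`, `i < j`, `f i > f j`. -/
noncomputable def affineLen (n : ℕ) (g : ℤ → ℤ) : ℕ :=
  {p : ℤ × ℤ | 1 ≤ p.1 ∧ p.1 ≤ n ∧ p.1 < p.2 ∧ g p.2 < g p.1}.ncard

namespace Stmt8H

def Win (n : ℕ) (g : ℤ → ℤ) (r : ℤ) : Set (ℤ × ℤ) :=
  {p : ℤ × ℤ | r < p.1 ∧ p.1 ≤ r + n ∧ p.1 < p.2 ∧ g p.2 < g p.1}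

lemma per {n : ℕ} {g : ℤ → ℤ} (hg : ∀ x : ℤ, g (x + n) = g x + n) :
    ∀ (p x : ℤ), g (x + p * n) = g x + p * n := by
  have hneg : ∀ x : ℤ, g (x - n) = g x - n := by
    intro x
    have h := hg (x - n)
    rw [sub_add_cancel] at h
    omega
  intro p
  induction p using Int.induction_on with
  | zero => intro x; simp
  | succ k ih =>
      intro x
      have h1 : x + ((k : ℤ) + 1) * n = (x + k * n) + n := by ring
      rw [h1, hg, ih]; ring
  | pred k ih =>
      intro x
      have h1 : x + (-(k : ℤ) - 1) * n = (x + (-(k:ℤ)) * n) - n := by ring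
      rw [h1, hneg, ih]; ring

lemma lowerBound {n : ℕ} (hn : 1 ≤ n) {g : ℤ → ℤ} (hg : ∀ x : ℤ, g (x + n) = g x + n) :
    ∃ L : ℤ, ∀ m : ℤ, m + L ≤ g m := by
  have hn' : (1 : ℤ) ≤ n := by exact_mod_cast hn
  have hne : (Finset.Icc (1:ℤ) n).Nonempty := ⟨1, by simp [Finset.mem_Icc, hn']⟩
  refine ⟨(Finset.Icc (1:ℤ) n).inf' hne g - n, ?_⟩
  intro m
  set q := (m - 1) / (n:ℤ) with hq
  set r := m - n * q with hrdef
  have hnz : (n : ℤ) ≠ 0 := by omega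
  have hmod : (m-1) % (n:ℤ) = m - 1 - n * q := by rw [Int.emod_def]
  have h1 : 0 ≤ (m-1) % (n:ℤ) := Int.emod_nonneg _ hnz
  have h2 : (m-1) % (n:ℤ) < n := Int.emod_lt_of_pos _ (by omega)
  have hcomm : (n:ℤ) * q = q * n := mul_comm _ _
  have hr1 : 1 ≤ r := by omega
  have hr2 : r ≤ n := by omega
  have hgm : g m = g r + q * n := by
    have : m = r + q * n := by omega
    rw [this, per hg]
  have hle : (Finset.Icc (1:ℤ) n).inf' hne g ≤ g r :=
    Finset.inf'_le g (by simp [Finset.mem_Icc]; omega)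
  omega

lemma codeFin {g : ℤ → ℤ} {L : ℤ} (hL : ∀ m, m + L ≤ g m) (a c : ℤ) :
    {m : ℤ | a < m ∧ g m < c}.Finite := by
  apply (Set.finite_Ioo a (c - L)).subset
  rintro m ⟨h1, h2⟩
  have := hL m
  exact ⟨h1, by omega⟩

lemma winFin {n : ℕ} (hn : 1 ≤ n) {g : ℤ → ℤ} {L : ℤ} (hL : ∀ m, m + L ≤ g m) (r : ℤ) :
    (Win n g r).Finite := by
  have hn' : (1 : ℤ) ≤ n := by exact_mod_cast hn
  have hne : (Finset.Ioc r (r + (n:ℤ))).Nonempty := ⟨r + 1, by simp [Finset.mem_Ioc]; omega⟩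
  set U := (Finset.Ioc r (r + (n:ℤ))).sup' hne g with hU
  apply ((Set.finite_Ioc r (r + (n:ℤ))).prod (Set.finite_Ioo r (U - L + 1))).subset
  intro p hp
  obtain ⟨h1, h2, h3, h4⟩ := hp
  have haU : g p.1 ≤ U := Finset.le_sup' g (by simp [Finset.mem_Ioc]; omega)
  have hb := hL p.2
  rw [Set.mem_prod]
  exact ⟨⟨h1, h2⟩, ⟨by omega, by omega⟩⟩

lemma winStep {n : ℕ} (hn : 1 ≤ n) {g : ℤ → ℤ} (hg : ∀ x : ℤ, g (x + n) = g x + n)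
    {L : ℤ} (hL : ∀ m, m + L ≤ g m) (r : ℤ) :
    (Win n g r).ncard = (Win n g (r+1)).ncard := by
  classical
  have hn' : (1 : ℤ) ≤ n := by exact_mod_cast hn
  set C : Set (ℤ×ℤ) := {p | r + 1 < p.1 ∧ p.1 ≤ r + n ∧ p.1 < p.2 ∧ g p.2 < g p.1} with hC
  set D : Set (ℤ×ℤ) := {p | p.1 = r + 1 ∧ p.1 < p.2 ∧ g p.2 < g p.1} with hD
  set D' : Set (ℤ×ℤ) := {p | p.1 = r + 1 + n ∧ p.1 < p.2 ∧ g p.2 < g p.1} with hD'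
  have hJr : Win n g r = C ∪ D := by
    ext p
    simp only [Win, Set.mem_setOf_eq, Set.mem_union, hC, hD]
    constructor
    · rintro ⟨h1, h2, h3, h4⟩
      by_cases he : p.1 = r + 1
      · exact Or.inr ⟨he, h3, h4⟩
      · exact Or.inl ⟨by omega, h2, h3, h4⟩
    · rintro (⟨h1, h2, h3, h4⟩ | ⟨h1, h3, h4⟩)
      · exact ⟨by omega, h2, h3, h4⟩
      · exact ⟨by omega, by omega, h3, h4⟩
  have hJr1 : Win n g (r+1) = C ∪ D' := by
    ext p
    simp only [Win, Set.mem_setOf_eq, Set.mem_union, hC, hD']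
    constructor
    · rintro ⟨h1, h2, h3, h4⟩
      by_cases he : p.1 = r + 1 + n
      · exact Or.inr ⟨he, h3, h4⟩
      · exact Or.inl ⟨by omega, by omega, h3, h4⟩
    · rintro (⟨h1, h2, h3, h4⟩ | ⟨h1, h3, h4⟩)
      · exact ⟨by omega, by omega, h3, h4⟩
      · exact ⟨by omega, by omega, h3, h4⟩
  have himg : D' = (fun p : ℤ×ℤ => (p.1 + (n:ℤ), p.2 + (n:ℤ))) '' D := by
    ext q
    simp only [hD, hD', Set.mem_setOf_eq, Set.mem_image]
    constructor
    · rintro ⟨h1, h2, h3⟩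
      refine ⟨(q.1 - n, q.2 - n), ⟨by simp; omega, by simp; omega, ?_⟩, ?_⟩
      · have e1 : g (q.1 - n + n) = g (q.1 - n) + n := hg _
        have e2 : g (q.2 - n + n) = g (q.2 - n) + n := hg _
        rw [sub_add_cancel] at e1 e2
        simp only
        omega
      · simp
    · rintro ⟨p, ⟨h1, h2, h3⟩, rfl⟩
      refine ⟨by simp; omega, by simp; omega, ?_⟩
      have e1 : g (p.1 + n) = g p.1 + n := hg _
      have e2 : g (p.2 + n) = g p.2 + n := hg _
      simp only
      omega
  have hinj : Function.Injective (fun p : ℤ×ℤ => (p.1 + (n:ℤ), p.2 + (n:ℤ))) := by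
    rintro ⟨a, b⟩ ⟨c, d⟩ h
    simp only [Prod.mk.injEq] at h
    have : a = c ∧ b = d := by omega
    simp [this.1, this.2]
  have hcardD : D'.ncard = D.ncard := by
    rw [himg, Set.ncard_image_of_injective _ hinj]
  have hfinC : C.Finite := (winFin hn hL r).subset (by
    rintro p ⟨h1, h2, h3, h4⟩; exact ⟨by omega, h2, h3, h4⟩)
  have hfinD : D.Finite := (winFin hn hL r).subset (by
    rintro p ⟨h1, h3, h4⟩; exact ⟨by omega, by omega, h3, h4⟩)
  have hfinD' : D'.Finite := (winFin hn hL (r+1)).subset (by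
    rintro p ⟨h1, h3, h4⟩; exact ⟨by omega, by omega, h3, h4⟩)
  have hdis : Disjoint C D := Set.disjoint_left.mpr (by
    rintro p ⟨h1, _, _, _⟩ ⟨h2, _, _⟩; omega)
  have hdis' : Disjoint C D' := Set.disjoint_left.mpr (by
    rintro p ⟨_, h1, _, _⟩ ⟨h2, _, _⟩; omega)
  rw [hJr, hJr1, Set.ncard_union_eq hdis hfinC hfinD,
    Set.ncard_union_eq hdis' hfinC hfinD', hcardD]

lemma winAll {n : ℕ} (hn : 1 ≤ n) {g : ℤ → ℤ} (hg : ∀ x : ℤ, g (x + n) = g x + n)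
    {L : ℤ} (hL : ∀ m, m + L ≤ g m) (r : ℤ) :
    (Win n g r).ncard = (Win n g 0).ncard := by
  induction r using Int.induction_on with
  | zero => rfl
  | succ k ih => rw [← winStep hn hg hL (k:ℤ), ih]
  | pred k ih =>
      have h := winStep hn hg hL (-(k:ℤ) - 1)
      rw [show (-(k:ℤ) - 1 + 1) = -(k:ℤ) by ring] at h
      rw [h, ih]

lemma dvd_bounded {n : ℕ} {d : ℤ} (h : (n:ℤ) ∣ d) (h1 : 0 ≤ d) (h2 : d < n) : d = 0 := by
  by_contra hne
  have hpos : 0 < d := by omega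
  have := Int.le_of_dvd hpos h
  omega

lemma s_cases {n : ℕ} {i : ℤ} {s : ℤ → ℤ}
    (hs1 : ∀ p : ℤ, s (i + p * n) = i + 1 + p * n)
    (hs2 : ∀ p : ℤ, s (i + 1 + p * n) = i + p * n)
    (hs3 : ∀ j : ℤ, (∀ p : ℤ, j ≠ i + p * n ∧ j ≠ i + 1 + p * n) → s j = j) :
    ∀ j : ℤ, ((n:ℤ) ∣ j - i ∧ s j = j + 1) ∨ ((n:ℤ) ∣ j - (i+1) ∧ s j = j - 1) ∨
      (¬ (n:ℤ) ∣ j - i ∧ ¬ (n:ℤ) ∣ j - (i+1) ∧ s j = j) := by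
  intro j
  by_cases h1 : (n:ℤ) ∣ j - i
  · left
    obtain ⟨p, hp⟩ := h1
    have hj : j = i + p * n := by rw [mul_comm] at hp; omega
    refine ⟨⟨p, hp⟩, ?_⟩
    rw [hj, hs1 p]; ring
  · by_cases h2 : (n:ℤ) ∣ j - (i+1)
    · right; left
      obtain ⟨p, hp⟩ := h2
      have hj : j = i + 1 + p * n := by rw [mul_comm] at hp; omega
      refine ⟨⟨p, hp⟩, ?_⟩
      rw [hj, hs2 p]; ring
    · right; right
      refine ⟨h1, h2, hs3 j ?_⟩
      intro p
      constructor
      · intro h; exact h1 ⟨p, by rw [h]; ring⟩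
      · intro h; exact h2 ⟨p, by rw [h]; ring⟩

end Stmt8H

/-- For an affine permutation `f` of quasi-period `n ≥ 2` and the
simple reflection `s = sᵢ`, one has `ℓ(f ∘ sᵢ) < ℓ(f)` iff `cᵢ(f) > c_{i+1}(f)`,
and in that case `c_j(f ∘ sᵢ) = c_{sᵢ(j)}(f) - 1` if `j ≡ i+1 (mod n)` and
`c_j(f ∘ sᵢ) = c_{sᵢ(j)}(f)` otherwise. -/
theorem stmt8 (n : ℕ) (hn : 2 ≤ n) (f : ℤ ≃ ℤ)
    (hf : ∀ i : ℤ, f (i + n) = f i + n)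
    (i : ℤ) (s : ℤ → ℤ)
    (hs1 : ∀ p : ℤ, s (i + p * n) = i + 1 + p * n)
    (hs2 : ∀ p : ℤ, s (i + 1 + p * n) = i + p * n)
    (hs3 : ∀ j : ℤ, (∀ p : ℤ, j ≠ i + p * n ∧ j ≠ i + 1 + p * n) → s j = j) :
    (affineLen n (⇑f ∘ s) < affineLen n ⇑f ↔ affineCode ⇑f (i + 1) < affineCode ⇑f i) ∧
    (affineLen n (⇑f ∘ s) < affineLen n ⇑f →
      ∀ j : ℤ,
        ((n : ℤ) ∣ (j - (i + 1)) →
          (affineCode (⇑f ∘ s) j : ℤ) = (affineCode ⇑f (s j) : ℤ) - 1) ∧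
        (¬ (n : ℤ) ∣ (j - (i + 1)) →
          affineCode (⇑f ∘ s) j = affineCode ⇑f (s j))) := by
  classical
  have hn1 : 1 ≤ n := by omega
  have hS := Stmt8H.s_cases hs1 hs2 hs3
  have hnd1 : ¬ ((n:ℤ) ∣ 1) := by
    intro h
    have := Int.le_of_dvd one_pos h
    omega
  have hsinv : ∀ j, s (s j) = j := by
    intro j
    rcases hS j with ⟨hd, he⟩ | ⟨hd, he⟩ | ⟨hd1, hd2, he⟩
    · rcases hS (j+1) with ⟨hda, hea⟩ | ⟨hda, hea⟩ | ⟨hda, hdb, hea⟩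
      · exfalso; apply hnd1
        have := dvd_sub hda hd
        rw [show j + 1 - i - (j - i) = 1 by ring] at this
        exact this
      · rw [he, hea]; ring
      · exfalso; apply hdb
        rw [show j + 1 - (i+1) = j - i by ring]; exact hd
    · rcases hS (j-1) with ⟨hda, hea⟩ | ⟨hda, hea⟩ | ⟨hda, hdb, hea⟩
      · rw [he, hea]; ring
      · exfalso; apply hnd1
        have := dvd_sub hd hda
        rw [show j - (i+1) - (j - 1 - (i+1)) = 1 by ring] at this
        exact this
      · exfalso; apply hda
        rw [show j - 1 - i = j - (i+1) by ring]; exact hd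
    · rw [he, he]
  have hsinj : Function.Injective s := by
    intro a b h
    rw [← hsinv a, h, hsinv]
  have hsbd : ∀ j, j - 1 ≤ s j ∧ s j ≤ j + 1 := by
    intro j
    rcases hS j with ⟨_, he⟩ | ⟨_, he⟩ | ⟨_, _, he⟩ <;> rw [he] <;> omega
  have hsper : ∀ x : ℤ, s (x + n) = s x + n := by
    intro x
    have hsh : ∀ c : ℤ, (n:ℤ) ∣ x - c → (n:ℤ) ∣ x + n - c := by
      intro c h
      rw [show x + (n:ℤ) - c = (x - c) + n by ring]
      exact dvd_add h dvd_rfl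
    have hsh' : ∀ c : ℤ, (n:ℤ) ∣ x + n - c → (n:ℤ) ∣ x - c := by
      intro c h
      have := dvd_sub h (dvd_refl (n:ℤ))
      rw [show x + (n:ℤ) - c - n = x - c by ring] at this
      exact this
    rcases hS x with ⟨hd, he⟩ | ⟨hd, he⟩ | ⟨hd1, hd2, he⟩
    · rcases hS (x + n) with ⟨hda, hea⟩ | ⟨hda, hea⟩ | ⟨hda, hdb, hea⟩
      · rw [he, hea]; ring
      · exfalso; apply hnd1
        have := dvd_sub (hsh i hd) hda
        rw [show x + (n:ℤ) - i - (x + n - (i+1)) = 1 by ring] at this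
        exact this
      · exact absurd (hsh i hd) hda
    · rcases hS (x + n) with ⟨hda, hea⟩ | ⟨hda, hea⟩ | ⟨hda, hdb, hea⟩
      · exfalso; apply hnd1
        have := dvd_sub hda (hsh (i+1) hd)
        rw [show x + (n:ℤ) - i - (x + n - (i+1)) = 1 by ring] at this
        exact this
      · rw [he, hea]; ring
      · exact absurd (hsh (i+1) hd) hdb
    · rcases hS (x + n) with ⟨hda, hea⟩ | ⟨hda, hea⟩ | ⟨hda, hdb, hea⟩
      · exact absurd (hsh' i hda) hd1
      · exact absurd (hsh' (i+1) hda) hd2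
      · rw [he, hea]
  -- periodicity of f and f ∘ s
  have hper : ∀ (p x : ℤ), f (x + p * n) = f x + p * n := Stmt8H.per hf
  have hfsper : ∀ x : ℤ, (⇑f ∘ s) (x + n) = (⇑f ∘ s) x + n := by
    intro x
    simp only [Function.comp_apply, hsper x, hf (s x)]
  obtain ⟨L, hL⟩ := Stmt8H.lowerBound hn1 hf
  have hLs : ∀ m : ℤ, m + (L - 1) ≤ (⇑f ∘ s) m := by
    intro m
    have h1 := hL (s m)
    have h2 := (hsbd m).1
    simp only [Function.comp_apply]
    omega
  have hfinCode : ∀ a c : ℤ, {m : ℤ | a < m ∧ f m < c}.Finite := Stmt8H.codeFin hL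
  -- pivot equivalence
  have hkeyper : ∀ j : ℤ, (n:ℤ) ∣ j - i → (f (j+1) < f j ↔ f (i+1) < f i) := by
    intro j hd
    obtain ⟨p, hp⟩ := hd
    rw [mul_comm] at hp
    have hj : j = i + p * n := by omega
    have h1 : f j = f i + p * n := by rw [hj]; exact hper p i
    have h2 : f (j+1) = f (i+1) + p * n := by
      rw [hj, show i + p * n + 1 = (i+1) + p * n by ring]; exact hper p (i+1)
    omega
  have hfne : f i ≠ f (i+1) := by
    intro he
    have := f.injective he
    omega
  -- Step A : code comparison at i
  have hcode_iff : affineCode ⇑f (i+1) < affineCode ⇑f i ↔ f (i+1) < f i := by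
    constructor
    · intro h
      by_contra hge
      have hlt' : f i < f (i+1) := by omega
      have hsub : {j : ℤ | i < j ∧ f j < f i} ⊆ {j : ℤ | i+1 < j ∧ f j < f (i+1)} := by
        rintro j ⟨h1, h2⟩
        have hji : j ≠ i + 1 := by
          intro he; rw [he] at h2; omega
        exact ⟨by omega, by omega⟩
      have hle := Set.ncard_le_ncard hsub (hfinCode (i+1) (f (i+1)))
      simp only [affineCode] at h
      omega
    · intro hlt
      apply Set.ncard_lt_ncard ?_ (hfinCode i (f i))
      rw [Set.ssubset_iff_of_subset]
      · exact ⟨i+1, ⟨by omega, hlt⟩, by simp⟩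
      · rintro j ⟨h1, h2⟩
        exact ⟨by omega, by omega⟩
  -- Step B : length comparison
  have hlen_eq : ∀ g : ℤ → ℤ, affineLen n g = (Stmt8H.Win n g 0).ncard := by
    intro g
    unfold affineLen Stmt8H.Win
    congr 1
    ext p
    simp only [Set.mem_setOf_eq]
    constructor
    · rintro ⟨h1, h2, h3, h4⟩; exact ⟨by omega, by omega, h3, h4⟩
    · rintro ⟨h1, h2, h3, h4⟩; exact ⟨by omega, by omega, h3, h4⟩
  set a0 : ℤ := (i - 1) % n + 1 with ha0
  have hnz : ((n:ℤ)) ≠ 0 := by omega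
  have ha0d : (n:ℤ) ∣ a0 - i := ⟨-((i-1)/n), by rw [ha0, Int.emod_def]; ring⟩
  have ha0b : 1 ≤ a0 ∧ a0 ≤ n := by
    have h1 := Int.emod_nonneg (i-1) hnz
    have h2 := Int.emod_lt_of_pos (i-1) (show (0:ℤ) < n by omega)
    omega
  have huniq : ∀ a : ℤ, a0 ≤ a → a ≤ a0 + n - 1 → (n:ℤ) ∣ a - i → a = a0 := by
    intro a h1 h2 hd
    have hd2 : (n:ℤ) ∣ a - a0 := by
      have h := dvd_sub hd ha0d
      rw [show a - i - (a0 - i) = a - a0 by ring] at h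
      exact h
    have := Stmt8H.dvd_bounded hd2 (by omega) (by omega)
    omega
  have huniq' : ∀ a : ℤ, a0 ≤ a → a ≤ a0 + n - 1 → (n:ℤ) ∣ a - (i+1) → a = a0 + 1 := by
    intro a h1 h2 hd
    have hd2 : (n:ℤ) ∣ a - (a0 + 1) := by
      have h := dvd_sub hd ha0d
      rw [show a - (i+1) - (a0 - i) = a - (a0+1) by ring] at h
      exact h
    by_cases hc : a = a0
    · exfalso
      apply hnd1
      have : (n:ℤ) ∣ -1 := by rw [show (-1 : ℤ) = a - (a0+1) by omega]; exact hd2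
      exact (dvd_neg.mp (by rwa [show (-1:ℤ) = -(1:ℤ) by ring] at this))
    · have := Stmt8H.dvd_bounded hd2 (by omega) (by omega)
      omega
  have hwin_s : ∀ a : ℤ, a0 ≤ a → a ≤ a0 + n - 1 → a0 ≤ s a ∧ s a ≤ a0 + n - 1 := by
    intro a h1 h2
    rcases hS a with ⟨hd, he⟩ | ⟨hd, he⟩ | ⟨_, _, he⟩
    · have := huniq a h1 h2 hd; rw [he]; omega
    · have := huniq' a h1 h2 hd; rw [he]; omega
    · rw [he]; omega
  have horder : ∀ a b : ℤ, a0 ≤ a → a ≤ a0 + n - 1 → a < b →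
      ¬(a = a0 ∧ b = a0 + 1) → s a < s b := by
    intro a b h1 h2 hab hne
    rcases hS a with ⟨hda, hea⟩ | ⟨hda, hea⟩ | ⟨hda1, hda2, hea⟩
    · have haa : a = a0 := huniq a h1 h2 hda
      rcases hS b with ⟨hdb, heb⟩ | ⟨hdb, heb⟩ | ⟨hdb1, hdb2, heb⟩
      · rw [hea, heb]; omega
      · -- n ∣ b - a - 1
        have hd : (n:ℤ) ∣ b - a - 1 := by
          have h := dvd_sub hdb hda
          rw [show b - (i+1) - (a - i) = b - a - 1 by ring] at h
          exact h
        have hb2 : b ≠ a + 1 := by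
          intro he; exact hne ⟨haa, by omega⟩
        have hpos : 0 < b - a - 1 := by omega
        have := Int.le_of_dvd hpos hd
        rw [hea, heb]; omega
      · have hb2 : b ≠ a0 + 1 := by
          intro he
          apply hdb2
          rw [he, show a0 + 1 - (i+1) = a0 - i by ring]
          exact ha0d
        rw [hea, heb]; omega
    · rcases hS b with ⟨hdb, heb⟩ | ⟨hdb, heb⟩ | ⟨hdb1, hdb2, heb⟩
      · rw [hea, heb]; omega
      · rw [hea, heb]; omega
      · rw [hea, heb]; omega
    · rcases hS b with ⟨hdb, heb⟩ | ⟨hdb, heb⟩ | ⟨hdb1, hdb2, heb⟩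
      · rw [hea, heb]; omega
      · have hb2 : b ≠ a + 1 := by
          intro he
          apply hda1
          have h : (n:ℤ) ∣ a + 1 - (i+1) := by rw [← he]; exact hdb
          rw [show a + 1 - (i+1) = a - i by ring] at h
          exact h
        rw [hea, heb]; omega
      · rw [hea, heb]; omega
  have hsa0 : s a0 = a0 + 1 := by
    rcases hS a0 with ⟨_, he⟩ | ⟨hd, he⟩ | ⟨hd1, _, _⟩
    · exact he
    · exfalso; apply hnd1
      have := dvd_sub ha0d hd
      rw [show a0 - i - (a0 - (i+1)) = 1 by ring] at this
      exact this
    · exact absurd ha0d hd1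
  have hsa0' : s (a0 + 1) = a0 := by
    rw [← hsa0, hsinv]
  -- the map Φ
  set Φ : ℤ × ℤ → ℤ × ℤ := fun p => (s p.1, s p.2) with hΦ
  have hΦΦ : ∀ p, Φ (Φ p) = p := by
    intro p; simp [hΦ, hsinv]
  have hΦinj : Function.Injective Φ := by
    intro p q h
    rw [← hΦΦ p, h, hΦΦ]
  set pr : ℤ × ℤ := (a0, a0 + 1) with hpr
  set A : Set (ℤ × ℤ) := Stmt8H.Win n (⇑f ∘ s) (a0 - 1) \ {pr} with hA
  set B : Set (ℤ × ℤ) := Stmt8H.Win n ⇑f (a0 - 1) \ {pr} with hB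
  have hprne : ∀ p : ℤ × ℤ, p.1 < p.2 → Φ p ≠ pr := by
    intro p hlt he
    have : p = Φ pr := by rw [← hΦΦ p, he]
    rw [hpr] at this
    simp only [hΦ, hsa0, hsa0'] at this
    rw [this] at hlt
    simp at hlt
  have hmemWin : ∀ (g : ℤ → ℤ) (p : ℤ × ℤ), p ∈ Stmt8H.Win n g (a0 - 1) ↔
      (a0 - 1 < p.1 ∧ p.1 ≤ a0 - 1 + n ∧ p.1 < p.2 ∧ g p.2 < g p.1) := by
    intro g p; rfl
  have hABmem : ∀ p : ℤ × ℤ, p ∈ A → Φ p ∈ B := by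
    intro p hp
    obtain ⟨hpw, hpne⟩ := hp
    obtain ⟨h1, h2, h3, h4⟩ := (hmemWin _ p).mp hpw
    have hw := hwin_s p.1 (by omega) (by omega)
    have hne' : ¬(p.1 = a0 ∧ p.2 = a0 + 1) := by
      intro ⟨he1, he2⟩
      apply hpne
      rw [hpr]
      simp only [Set.mem_singleton_iff]
      exact Prod.ext he1 he2
    have ho := horder p.1 p.2 (by omega) (by omega) h3 hne'
    constructor
    · rw [hmemWin]
      exact ⟨by simp [hΦ]; omega, by simp [hΦ]; omega, by simpa [hΦ] using ho, h4⟩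
    · simp only [Set.mem_singleton_iff]
      exact hprne p h3
  have hBAmem : ∀ p : ℤ × ℤ, p ∈ B → Φ p ∈ A := by
    intro p hp
    obtain ⟨hpw, hpne⟩ := hp
    obtain ⟨h1, h2, h3, h4⟩ := (hmemWin _ p).mp hpw
    have hw := hwin_s p.1 (by omega) (by omega)
    have hne' : ¬(p.1 = a0 ∧ p.2 = a0 + 1) := by
      intro ⟨he1, he2⟩
      apply hpne
      rw [hpr]
      simp only [Set.mem_singleton_iff]
      exact Prod.ext he1 he2
    have ho := horder p.1 p.2 (by omega) (by omega) h3 hne'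
    constructor
    · rw [hmemWin]
      refine ⟨by simp [hΦ]; omega, by simp [hΦ]; omega, by simpa [hΦ] using ho, ?_⟩
      simp only [hΦ, Function.comp_apply, hsinv]
      exact h4
    · simp only [Set.mem_singleton_iff]
      exact hprne p h3
  have hABeq : Φ '' A = B := by
    apply subset_antisymm
    · rintro q ⟨p, hp, rfl⟩
      exact hABmem p hp
    · intro q hq
      exact ⟨Φ q, hBAmem q hq, hΦΦ q⟩
  have hcardAB : A.ncard = B.ncard := by
    rw [← hABeq, Set.ncard_image_of_injective _ hΦinj]
  have hfinWf : (Stmt8H.Win n ⇑f (a0 - 1)).Finite := Stmt8H.winFin hn1 hL _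
  have hfinWs : (Stmt8H.Win n (⇑f ∘ s) (a0 - 1)).Finite := Stmt8H.winFin hn1 hLs _
  have hprWf : pr ∈ Stmt8H.Win n ⇑f (a0 - 1) ↔ f (a0 + 1) < f a0 := by
    have h0 : pr ∈ Stmt8H.Win n ⇑f (a0 - 1) ↔
        (a0 - 1 < a0 ∧ a0 ≤ a0 - 1 + n ∧ a0 < a0 + 1 ∧ f (a0 + 1) < f a0) := Iff.rfl
    rw [h0]
    constructor
    · intro h; exact h.2.2.2
    · intro h; exact ⟨by omega, by omega, by omega, h⟩
  have hprWs : pr ∈ Stmt8H.Win n (⇑f ∘ s) (a0 - 1) ↔ f a0 < f (a0 + 1) := by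
    have h0 : pr ∈ Stmt8H.Win n (⇑f ∘ s) (a0 - 1) ↔
        (a0 - 1 < a0 ∧ a0 ≤ a0 - 1 + n ∧ a0 < a0 + 1 ∧ f (s (a0 + 1)) < f (s a0)) := Iff.rfl
    rw [h0, hsa0, hsa0']
    constructor
    · intro h; exact h.2.2.2
    · intro h; exact ⟨by omega, by omega, by omega, h⟩
  have hkey0 : f (a0 + 1) < f a0 ↔ f (i+1) < f i := hkeyper a0 ha0d
  have hfne0 : f a0 ≠ f (a0 + 1) := by
    intro he
    have := f.injective he
    omega
  have hlen_iff : affineLen n (⇑f ∘ s) < affineLen n ⇑f ↔ f (i+1) < f i := by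
    rw [hlen_eq (⇑f ∘ s), hlen_eq ⇑f,
      ← Stmt8H.winAll hn1 hfsper hLs (a0 - 1), ← Stmt8H.winAll hn1 hf hL (a0 - 1)]
    by_cases hlt : f (i+1) < f i
    · simp only [hlt, iff_true]
      have h1 : pr ∈ Stmt8H.Win n ⇑f (a0 - 1) := hprWf.mpr (hkey0.mpr hlt)
      have h2 : pr ∉ Stmt8H.Win n (⇑f ∘ s) (a0 - 1) := by
        intro h
        have := hprWs.mp h
        have := hkey0.mpr hlt
        omega
      have e1 : B.ncard + 1 = (Stmt8H.Win n ⇑f (a0 - 1)).ncard :=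
        Set.ncard_diff_singleton_add_one h1 hfinWf
      have e2 : (Stmt8H.Win n (⇑f ∘ s) (a0 - 1)).ncard = A.ncard := by
        rw [hA, Set.diff_singleton_eq_self h2]
      omega
    · simp only [hlt, iff_false, not_lt]
      have hlt' : f a0 < f (a0 + 1) := by
        have := hkey0
        omega
      have h1 : pr ∈ Stmt8H.Win n (⇑f ∘ s) (a0 - 1) := hprWs.mpr hlt'
      have h2 : pr ∉ Stmt8H.Win n ⇑f (a0 - 1) := by
        intro h
        have := hprWf.mp h
        omega
      have e1 : A.ncard + 1 = (Stmt8H.Win n (⇑f ∘ s) (a0 - 1)).ncard :=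
        Set.ncard_diff_singleton_add_one h1 hfinWs
      have e2 : (Stmt8H.Win n ⇑f (a0 - 1)).ncard = B.ncard := by
        rw [hB, Set.diff_singleton_eq_self h2]
      omega
  -- transfer of the code set along s
  have himg : ∀ j : ℤ, affineCode (⇑f ∘ s) j = {m : ℤ | j < s m ∧ f m < f (s j)}.ncard := by
    intro j
    have hseteq : {k : ℤ | j < k ∧ (⇑f ∘ s) k < (⇑f ∘ s) j} =
        s '' {m : ℤ | j < s m ∧ f m < f (s j)} := by
      ext k
      simp only [Set.mem_setOf_eq, Set.mem_image, Function.comp_apply]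
      constructor
      · rintro ⟨h1, h2⟩
        exact ⟨s k, ⟨by rw [hsinv]; exact h1, h2⟩, hsinv k⟩
      · rintro ⟨m, ⟨h1, h2⟩, rfl⟩
        exact ⟨h1, by rw [hsinv]; exact h2⟩
    unfold affineCode
    rw [hseteq, Set.ncard_image_of_injective _ hsinj]
  refine ⟨hlen_iff.trans hcode_iff.symm, ?_⟩
  intro hl j
  have hlt : f (i+1) < f i := hlen_iff.mp hl
  constructor
  · -- j ≡ i + 1 mod n
    intro hdj
    have hsj : s j = j - 1 := by
      rcases hS j with ⟨hd, he⟩ | ⟨_, he⟩ | ⟨_, hd2, _⟩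
      · exfalso; apply hnd1
        have := dvd_sub hdj hd
        rw [show j - (i+1) - (j - i) = -1 by ring] at this
        have := dvd_neg.mpr this
        rwa [show -(-1 : ℤ) = 1 by ring] at this
      · exact he
      · exact absurd hdj hd2
    have hset : {m : ℤ | j < s m ∧ f m < f (s j)} =
        {m : ℤ | j - 1 < m ∧ f m < f (j-1)} \ {j} := by
      rw [hsj]
      ext m
      simp only [Set.mem_setOf_eq, Set.mem_diff, Set.mem_singleton_iff]
      constructor
      · rintro ⟨h1, h2⟩
        have hb := hsbd m
        refine ⟨⟨by omega, h2⟩, ?_⟩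
        intro he
        rw [he, hsj] at h1
        omega
      · rintro ⟨⟨h1, h2⟩, h3⟩
        refine ⟨?_, h2⟩
        rcases hS m with ⟨_, he⟩ | ⟨hdm, he⟩ | ⟨_, _, he⟩
        · rw [he]; omega
        · rw [he]
          by_contra hc
          have hmj : m = j + 1 := by omega
          apply hnd1
          have h := dvd_sub hdm hdj
          rw [show m - (i+1) - (j - (i+1)) = m - j by ring, hmj,
            show j + 1 - j = 1 by ring] at h
          exact h
        · rw [he]; omega
    rw [himg j, hset, hsj]
    have hmem : j ∈ {m : ℤ | j - 1 < m ∧ f m < f (j-1)} := by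
      refine ⟨by omega, ?_⟩
      obtain ⟨p, hp⟩ := hdj
      rw [mul_comm] at hp
      have hj1 : j = (i+1) + p * n := by omega
      have h1 : f j = f (i+1) + p * n := by rw [hj1]; exact hper p (i+1)
      have h2 : f (j-1) = f i + p * n := by
        rw [show j - 1 = i + p * n by omega]; exact hper p i
      omega
    have hfin : {m : ℤ | j - 1 < m ∧ f m < f (j-1)}.Finite := hfinCode (j-1) (f (j-1))
    have hpos : 0 < {m : ℤ | j - 1 < m ∧ f m < f (j-1)}.ncard :=
      (Set.ncard_pos hfin).mpr ⟨j, hmem⟩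
    have hdiff := Set.ncard_diff_singleton_of_mem hmem
    have : affineCode ⇑f (j-1) = {m : ℤ | j - 1 < m ∧ f m < f (j-1)}.ncard := rfl
    rw [this, hdiff]
    omega
  · -- j ≢ i + 1 mod n
    intro hndj
    rcases hS j with ⟨hdj, hsj⟩ | ⟨hdj, _⟩ | ⟨hdj1, hdj2, hsj⟩
    · -- j ≡ i mod n
      have hset : {m : ℤ | j < s m ∧ f m < f (s j)} =
          {m : ℤ | j + 1 < m ∧ f m < f (j+1)} := by
        rw [hsj]
        ext m
        simp only [Set.mem_setOf_eq]
        constructor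
        · rintro ⟨h1, h2⟩
          refine ⟨?_, h2⟩
          rcases hS m with ⟨hdm, he⟩ | ⟨hdm, he⟩ | ⟨hdm1, hdm2, he⟩
          · rw [he] at h1
            by_contra hc
            have : m = j ∨ m = j + 1 := by omega
            rcases this with he1 | he1
            · rw [he1] at h2
              have := (hkeyper j hdj).mpr hlt
              omega
            · apply hnd1
              have h := dvd_sub hdm hdj
              rw [show m - i - (j - i) = m - j by ring, he1,
                show j + 1 - j = 1 by ring] at h
              exact h
          · rw [he] at h1; omega
          · rw [he] at h1
            by_contra hc
            have hmj : m = j + 1 := by omega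
            apply hdm2
            rw [hmj, show j + 1 - (i+1) = j - i by ring]
            exact hdj
        · rintro ⟨h1, h2⟩
          have hb := (hsbd m).1
          exact ⟨by omega, h2⟩
      rw [himg j, hset, hsj]
      rfl
    · exact absurd hdj hndj
    · -- j ≢ i, i+1 mod n
      have hset : {m : ℤ | j < s m ∧ f m < f (s j)} =
          {m : ℤ | j < m ∧ f m < f j} := by
        rw [hsj]
        ext m
        simp only [Set.mem_setOf_eq]
        constructor
        · rintro ⟨h1, h2⟩
          have hb := hsbd m
          refine ⟨?_, h2⟩
          by_contra hc
          have hmj : m = j := by omega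
          rw [hmj, hsj] at h1
          omega
        · rintro ⟨h1, h2⟩
          refine ⟨?_, h2⟩
          rcases hS m with ⟨_, he⟩ | ⟨hdm, he⟩ | ⟨_, _, he⟩
          · rw [he]; omega
          · rw [he]
            by_contra hc
            have hmj : m = j + 1 := by omega
            apply hdj1
            have h : (n:ℤ) ∣ j + 1 - (i+1) := by rw [← hmj]; exact hdm
            rwa [show j + 1 - (i+1) = j - i by ring] at h
          · rw [he]; omega
      rw [himg j, hset, hsj]
      rfl
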